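/- Let P be a probability measure and suppose functions φ_{ε,λ}, φ_P ∈ L²(P) and probability measures H_{x,λ} ≪ P satisfy: (i) lim_{λ→0} ∫ φ_P dH_{x,λ} = φ_P(x); (ii) lim_{λ→0} lim_{ε→0} ∫ φ_{ε,λ} dP = 0; and (iii) lim_{λ→0} lim_{ε→0} r(λ)‖φ_{ε,λ} − φ_P‖_{L²(P)} = 0, where r(λ) := ‖dH_{x,λ}/dP‖_{L²(P)}. Then lim_{λ→0} lim_{ε→0} ∫ φ_{ε,λ} d(H_{x,λ} − P) = φ_P(x). -/

import Mathlib

open MeasureTheory Filter Topology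

lemma eif_cs {α : Type*} [MeasurableSpace α] (P : Measure α) (h f : α → ℝ)
    (hh2 : MemLp h 2 P) (hf2 : MemLp f 2 P) :
    |∫ u, f u * h u ∂P| ≤ Real.sqrt (∫ u, h u ^ 2 ∂P) * Real.sqrt (∫ u, f u ^ 2 ∂P) := by
  have htwo : ENNReal.ofReal (2:ℝ) = 2 := by norm_num
  have h1 : |∫ u, f u * h u ∂P| ≤ ∫ u, |h u| * |f u| ∂P := by
    calc |∫ u, f u * h u ∂P| ≤ ∫ u, |f u| * |h u| ∂P := by
          simpa [Real.norm_eq_abs, abs_mul] using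
            norm_integral_le_integral_norm (μ := P) (fun u => f u * h u)
    _ = ∫ u, |h u| * |f u| ∂P := by simp [mul_comm]
  have h2 : ∫ u, |h u| * |f u| ∂P ≤
      (∫ u, |h u| ^ (2:ℝ) ∂P) ^ ((1:ℝ)/2) * (∫ u, |f u| ^ (2:ℝ) ∂P) ^ ((1:ℝ)/2) := by
    refine integral_mul_le_Lp_mul_Lq_of_nonneg ⟨by norm_num, by norm_num, by norm_num⟩
      (Eventually.of_forall fun u => abs_nonneg _) (Eventually.of_forall fun u => abs_nonneg _)
      ?_ ?_
    · rw [htwo]; simpa using hh2.norm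
    · rw [htwo]; simpa using hf2.norm
  have e1 : ∀ g : α → ℝ, (∫ u, |g u| ^ (2:ℝ) ∂P) ^ ((1:ℝ)/2) = Real.sqrt (∫ u, g u ^ 2 ∂P) := by
    intro g
    have : (fun u => |g u| ^ (2:ℝ)) = fun u => g u ^ 2 := by
      ext u
      rw [show ((2:ℝ)) = ((2:ℕ):ℝ) by norm_num, Real.rpow_natCast, sq_abs]
    rw [this, Real.sqrt_eq_rpow]
  calc |∫ u, f u * h u ∂P| ≤ ∫ u, |h u| * |f u| ∂P := h1
  _ ≤ _ := h2
  _ = _ := by rw [e1 h, e1 f]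

lemma eif_int_wd {α : Type*} [MeasurableSpace α] (P : Measure α) (h f : α → ℝ)
    (hhm : Measurable h) (hpos : ∀ᵐ u ∂P, 0 ≤ h u) :
    ∫ u, f u ∂(P.withDensity fun u => ENNReal.ofReal (h u)) = ∫ u, f u * h u ∂P := by
  have : (fun u => ENNReal.ofReal (h u)) = fun u => ((h u).toNNReal : ENNReal) := rfl
  rw [this, integral_withDensity_eq_integral_smul hhm.real_toNNReal]
  refine integral_congr_ae ?_
  filter_upwards [hpos] with u hu
  simp [NNReal.smul_def, Real.coe_toNNReal _ hu, mul_comm]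

lemma eif_int_mul {α : Type*} [MeasurableSpace α] (P : Measure α) (h f : α → ℝ)
    (hh2 : MemLp h 2 P) (hf2 : MemLp f 2 P) : Integrable (fun u => f u * h u) P := by
  have h1 : (1:ENNReal)/1 = 1/2 + 1/2 := by
    simp only [one_div, inv_one]; exact ENNReal.inv_two_add_inv_two.symm
  haveI : ENNReal.HolderTriple 2 2 1 := ⟨by simpa [one_div] using h1.symm⟩
  have := hf2.smul (φ := h) hh2 (r := 1)
  rw [memLp_one_iff_integrable] at this
  have e : (h • f) = fun u => f u * h u := by ext u; simp [mul_comm]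
  rwa [e] at this

lemma eif_extract {p : ℝ → Prop} (hp : ∀ᶠ lam in nhdsWithin (0:ℝ) (Set.Ioi 0), p lam) :
    ∃ a : ℝ, 0 < a ∧ ∀ lam : ℝ, 0 < lam → lam < a → p lam := by
  rw [eventually_iff, mem_nhdsGT_iff_exists_Ioo_subset] at hp
  obtain ⟨a, ha, hsub⟩ := hp
  exact ⟨a, ha, fun lam h1 h2 => hsub ⟨h1, h2⟩⟩

/-- Theorem 3(b) of the paper. -/
theorem eif_continuity {α : Type*} [MeasurableSpace α]
    (P : Measure α) [IsProbabilityMeasure P] (x : α)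
    (h : ℝ → α → ℝ) (hhm : ∀ lam, Measurable (h lam))
    (hh0 : ∀ lam : ℝ, 0 < lam → ∀ᵐ u ∂P, 0 ≤ h lam u)
    (H : ℝ → Measure α)
    (hH : ∀ lam : ℝ, 0 < lam →
      H lam = P.withDensity (fun u => ENNReal.ofReal (h lam u)))
    (hHprob : ∀ lam : ℝ, 0 < lam → IsProbabilityMeasure (H lam))
    (hhL2 : ∀ lam : ℝ, 0 < lam → MemLp (h lam) 2 P)
    (φ : ℝ → ℝ → α → ℝ) (φP : α → ℝ)
    (hφL2 : ∀ ε lam : ℝ, 0 < ε → 0 < lam → MemLp (φ ε lam) 2 P)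
    (hφPL2 : MemLp φP 2 P)
    -- (i)
    (hi : Tendsto (fun lam => ∫ u, φP u ∂(H lam)) (𝓝[>] 0) (𝓝 (φP x)))
    -- (ii)
    (hii : ∃ g : ℝ → ℝ,
      (∀ lam : ℝ, 0 < lam →
        Tendsto (fun ε => ∫ u, φ ε lam u ∂P) (𝓝[>] 0) (𝓝 (g lam))) ∧
      Tendsto g (𝓝[>] 0) (𝓝 0))
    -- (iii)
    (hiii : ∃ g : ℝ → ℝ,
      (∀ lam : ℝ, 0 < lam →
        Tendsto
          (fun ε => Real.sqrt (∫ u, (h lam u) ^ 2 ∂P) *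
            Real.sqrt (∫ u, (φ ε lam u - φP u) ^ 2 ∂P))
          (𝓝[>] 0) (𝓝 (g lam))) ∧
      Tendsto g (𝓝[>] 0) (𝓝 0)) :
    ∀ δ : ℝ, 0 < δ → ∃ lam₀ : ℝ, 0 < lam₀ ∧ ∀ lam : ℝ, 0 < lam → lam < lam₀ →
      ∃ ε₀ : ℝ, 0 < ε₀ ∧ ∀ ε : ℝ, 0 < ε → ε < ε₀ →
        |(∫ u, φ ε lam u ∂(H lam) - ∫ u, φ ε lam u ∂P) - φP x| < δ := by
  obtain ⟨g2, hg2, hg2lim⟩ := hii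
  obtain ⟨g3, hg3, hg3lim⟩ := hiii
  intro δ hδ
  have E1 : ∀ᶠ lam in 𝓝[>] (0:ℝ),
      |(∫ u, φP u ∂(H lam)) - φP x| < δ/4 := by
    have := hi (Metric.ball_mem_nhds (φP x) (show (0:ℝ) < δ/4 by linarith))
    filter_upwards [this] with lam hl
    simpa [Real.dist_eq] using hl
  have E2 : ∀ᶠ lam in 𝓝[>] (0:ℝ), |g2 lam| < δ/8 := by
    have := hg2lim (Metric.ball_mem_nhds (0:ℝ) (show (0:ℝ) < δ/8 by linarith))
    filter_upwards [this] with lam hl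
    simpa [Real.dist_eq] using hl
  have E3 : ∀ᶠ lam in 𝓝[>] (0:ℝ), |g3 lam| < δ/8 := by
    have := hg3lim (Metric.ball_mem_nhds (0:ℝ) (show (0:ℝ) < δ/8 by linarith))
    filter_upwards [this] with lam hl
    simpa [Real.dist_eq] using hl
  obtain ⟨lam₀, hlam₀, hlam⟩ := eif_extract (E1.and (E2.and E3))
  refine ⟨lam₀, hlam₀, fun lam hlam1 hlam2 => ?_⟩
  obtain ⟨hA, hB, hC⟩ := hlam lam hlam1 hlam2
  have F1 : ∀ᶠ ε in 𝓝[>] (0:ℝ), |(∫ u, φ ε lam u ∂P) - g2 lam| < δ/8 := by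
    have := (hg2 lam hlam1) (Metric.ball_mem_nhds (g2 lam) (show (0:ℝ) < δ/8 by linarith))
    filter_upwards [this] with ε hε
    simpa [Real.dist_eq] using hε
  have F2 : ∀ᶠ ε in 𝓝[>] (0:ℝ),
      |Real.sqrt (∫ u, (h lam u) ^ 2 ∂P) *
        Real.sqrt (∫ u, (φ ε lam u - φP u) ^ 2 ∂P) - g3 lam| < δ/8 := by
    have := (hg3 lam hlam1) (Metric.ball_mem_nhds (g3 lam) (show (0:ℝ) < δ/8 by linarith))
    filter_upwards [this] with ε hε
    simpa [Real.dist_eq] using hε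
  obtain ⟨ε₀, hε₀, hεall⟩ := eif_extract (F1.and F2)
  refine ⟨ε₀, hε₀, fun ε hε1 hε2 => ?_⟩
  obtain ⟨hD, hE⟩ := hεall ε hε1 hε2
  -- notation
  set CS := Real.sqrt (∫ u, (h lam u) ^ 2 ∂P) *
      Real.sqrt (∫ u, (φ ε lam u - φP u) ^ 2 ∂P) with hCSdef
  have hφ2 := hφL2 ε lam hε1 hlam1
  have hh2 := hhL2 lam hlam1
  have hpos := hh0 lam hlam1
  have hm := hhm lam
  -- integrals wrt H
  have I1 : ∫ u, φ ε lam u ∂(H lam) = ∫ u, φ ε lam u * h lam u ∂P := by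
    rw [hH lam hlam1]; exact eif_int_wd P (h lam) _ hm hpos
  have I2 : ∫ u, φP u ∂(H lam) = ∫ u, φP u * h lam u ∂P := by
    rw [hH lam hlam1]; exact eif_int_wd P (h lam) _ hm hpos
  have int1 : Integrable (fun u => φ ε lam u * h lam u) P := eif_int_mul P _ _ hh2 hφ2
  have int2 : Integrable (fun u => φP u * h lam u) P := eif_int_mul P _ _ hh2 hφPL2
  have Isub : ∫ u, (φ ε lam u - φP u) * h lam u ∂P =
      (∫ u, φ ε lam u * h lam u ∂P) - ∫ u, φP u * h lam u ∂P := by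
    rw [← integral_sub int1 int2]
    congr 1; ext u; ring
  have hCSbound : |(∫ u, φ ε lam u * h lam u ∂P) - ∫ u, φP u * h lam u ∂P| ≤ CS := by
    rw [← Isub]
    exact eif_cs P (h lam) _ hh2 (hφ2.sub hφPL2)
  have hCSsmall : CS < δ/4 := by
    have : CS ≤ |CS| := le_abs_self _
    have h2 : |CS| < |g3 lam| + δ/8 := by
      have := abs_sub_abs_le_abs_sub CS (g3 lam)
      linarith [hE]
    linarith [hC]
  have hDsmall : |∫ u, φ ε lam u ∂P| < δ/4 := by
    have := abs_sub_abs_le_abs_sub (∫ u, φ ε lam u ∂P) (g2 lam)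
    linarith [hB, hD]
  -- final assembly
  have key : (∫ u, φ ε lam u ∂(H lam) - ∫ u, φ ε lam u ∂P) - φP x =
      ((∫ u, φ ε lam u * h lam u ∂P) - ∫ u, φP u * h lam u ∂P)
      + ((∫ u, φP u ∂(H lam)) - φP x) - ∫ u, φ ε lam u ∂P := by
    rw [I1, ← I2]; ring
  rw [key]
  have habs : |((∫ u, φ ε lam u * h lam u ∂P) - ∫ u, φP u * h lam u ∂P)
      + ((∫ u, φP u ∂(H lam)) - φP x) - ∫ u, φ ε lam u ∂P| ≤
      |(∫ u, φ ε lam u * h lam u ∂P) - ∫ u, φP u * h lam u ∂P|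
      + |(∫ u, φP u ∂(H lam)) - φP x| + |∫ u, φ ε lam u ∂P| := by
    calc _ ≤ |((∫ u, φ ε lam u * h lam u ∂P) - ∫ u, φP u * h lam u ∂P)
        + ((∫ u, φP u ∂(H lam)) - φP x)| + |∫ u, φ ε lam u ∂P| := abs_sub _ _
    _ ≤ _ := by gcongr; exact abs_add_le _ _
  have := hCSbound
  linarith [habs, hA, hCSsmall, hDsmall, hCSbound]
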